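/- Let 1 ≤ j ≤ k−1 be integers. There exists a constant C = C(k,j) > 0 such that for every finite set V and all integers ℓ, r, b with ℓ > r ≥ 0 and ℓ > b ≥ 0, exchanging the roles of the two colours, the number of edge-minimal traversable triples on V of size ℓ with r red edges and b blue edges also satisfies |T_{ℓ,r,b}| ≤ |V|^j · C^{ℓ−1} · (|V|^{k−j})^b · (ℓ·|V|^{k−j−1})^r. -/

import Mathlib

open Finset Filter

/-- A subfamily `Jstar ⊆ Jfam` of `j`-sets is `Jfam`-traversable in the `k`-graph `(V, E)`:
for any two distinct `A, B ∈ Jstar` there is a sequence of edges `e_0, …, e_m ∈ E` with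
`A ⊆ e_0`, `B ⊆ e_m`, such that the intersection of any two consecutive edges contains some
`j`-set belonging to `Jfam`.  (Singletons are trivially traversable.) -/
def TravIn {V : Type*} [DecidableEq V] (Jfam E Jstar : Finset (Finset V)) : Prop :=
  ∀ A ∈ Jstar, ∀ B ∈ Jstar, A ≠ B →
    ∃ (m : ℕ) (es : Fin (m + 1) → Finset V),
      (∀ i, es i ∈ E) ∧ A ⊆ es 0 ∧ B ⊆ es (Fin.last m) ∧
      ∀ i : Fin m, ∃ I ∈ Jfam, I ⊆ es i.castSucc ∧ I ⊆ es i.succ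

/-- The family `Jfam` is traversable in `(V, E)` if it is `Jfam`-traversable. -/
def Trav {V : Type*} [DecidableEq V] (Jfam E : Finset (Finset V)) : Prop :=
  TravIn Jfam E Jfam

/-- A triple `(J0, E1, E2)` is traversable if `J0` is traversable in both the red `k`-graph
`(V, E1)` and the blue `k`-graph `(V, E2)`. -/
def TravTriple {V : Type*} [DecidableEq V] (J0 E1 E2 : Finset (Finset V)) : Prop :=
  Trav J0 E1 ∧ Trav J0 E2

/-- A triple `(J0, E1, E2)` is an edge-minimal traversable triple if it is traversable and
removing any edge from `E1` or from `E2` destroys traversability. -/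
def EdgeMinTravTriple {V : Type*} [DecidableEq V] (J0 E1 E2 : Finset (Finset V)) : Prop :=
  TravTriple J0 E1 E2 ∧
  (∀ e ∈ E1, ¬ Trav J0 (E1.erase e)) ∧
  (∀ e ∈ E2, ¬ Trav J0 (E2.erase e))
/-- `T_{ℓ,r,b}`: the set of all edge-minimal traversable triples `(J0, E1, E2)` on the
finite vertex set `V` (with `J0 ⊆ V^{(j)}` and `E1, E2 ⊆ V^{(k)}`) of size `|J0| = ℓ` with
`|E1| = r` red edges and `|E2| = b` blue edges. -/
def minTravTriples (k j : ℕ) (V : Type*) [DecidableEq V] [Fintype V] (ℓ r b : ℕ) :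
    Set (Finset (Finset V) × Finset (Finset V) × Finset (Finset V)) :=
  {T | T.1 ⊆ (Finset.univ : Finset V).powersetCard j ∧
       T.2.1 ⊆ (Finset.univ : Finset V).powersetCard k ∧
       T.2.2 ⊆ (Finset.univ : Finset V).powersetCard k ∧
       EdgeMinTravTriple T.1 T.2.1 T.2.2 ∧
       T.1.card = ℓ ∧ T.2.1.card = r ∧ T.2.2.card = b}


namespace MTTaux


variable {α : Type*} [DecidableEq α]

/-- Valid DFS move sequences: `L` moves remaining, `d` "down" moves remaining,
`st` the stack, `cur` the current vertex, `vis` the visited set. -/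
def validSeqs (nbr : α → Finset α) : ℕ → ℕ → List α → α → Finset α → Finset (List (Option α))
  | 0 => fun d _ _ _ => if d = 0 then {[]} else ∅
  | L + 1 => fun d st cur vis =>
      (match st with
       | [] => (∅ : Finset (List (Option α)))
       | p :: st' => (validSeqs nbr L d st' p vis).image (List.cons none)) ∪
      (match d with
       | 0 => (∅ : Finset (List (Option α)))
       | d' + 1 => (nbr cur \ vis).biUnion fun x =>
           (validSeqs nbr L d' (cur :: st) x (insert x vis)).image (List.cons (some x)))

lemma validSeqs_zero {nbr : α → Finset α} (d : ℕ) (st : List α) (cur : α) (vis : Finset α) :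
    validSeqs nbr 0 d st cur vis = if d = 0 then {[]} else ∅ := rfl

variable {nbr : α → Finset α}

lemma validSeqs_succ_eq (L d : ℕ) (st : List α) (cur : α) (vis : Finset α) :
    validSeqs nbr (L + 1) d st cur vis =
      (match st with
       | [] => (∅ : Finset (List (Option α)))
       | p :: st' => (validSeqs nbr L d st' p vis).image (List.cons none)) ∪
      (match d with
       | 0 => (∅ : Finset (List (Option α)))
       | d' + 1 => (nbr cur \ vis).biUnion fun x =>
           (validSeqs nbr L d' (cur :: st) x (insert x vis)).image (List.cons (some x))) := rfl

lemma mem_validSeqs_succ {L d : ℕ} {st : List α} {cur : α} {vis : Finset α}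
    {ms : List (Option α)} :
    ms ∈ validSeqs nbr (L + 1) d st cur vis ↔
      (∃ p st' rest, st = p :: st' ∧ ms = none :: rest ∧ rest ∈ validSeqs nbr L d st' p vis) ∨
      (∃ d' x rest, d = d' + 1 ∧ x ∈ nbr cur \ vis ∧ ms = some x :: rest ∧
        rest ∈ validSeqs nbr L d' (cur :: st) x (insert x vis)) := by
  rw [validSeqs]
  cases st with
  | nil =>
    cases d with
    | zero => simp
    | succ d' =>
      simp only [Finset.mem_union, Finset.notMem_empty, false_or, Finset.mem_biUnion,
        Finset.mem_image]
      constructor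
      · rintro ⟨x, hx, rest, hrest, rfl⟩
        exact Or.inr ⟨d', x, rest, rfl, hx, rfl, hrest⟩
      · rintro (⟨p, st', rest, h, _⟩ | ⟨d'', x, rest, hd, hx, rfl, hrest⟩)
        · exact absurd h (by simp)
        · obtain rfl : d'' = d' := by omega
          exact ⟨x, hx, rest, hrest, rfl⟩
  | cons p st' =>
    cases d with
    | zero =>
      simp only [Finset.mem_union, Finset.notMem_empty, or_false, Finset.mem_image]
      constructor
      · rintro ⟨rest, hrest, rfl⟩
        exact Or.inl ⟨p, st', rest, rfl, rfl, hrest⟩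
      · rintro (⟨p', st'', rest, h, rfl, hrest⟩ | ⟨d'', x, rest, hd, _⟩)
        · obtain ⟨rfl, rfl⟩ : p = p' ∧ st' = st'' := by simpa using h
          exact ⟨rest, hrest, rfl⟩
        · exact absurd hd (by simp)
    | succ d' =>
      simp only [Finset.mem_union, Finset.mem_image, Finset.mem_biUnion]
      constructor
      · rintro (⟨rest, hrest, rfl⟩ | ⟨x, hx, rest, hrest, rfl⟩)
        · exact Or.inl ⟨p, st', rest, rfl, rfl, hrest⟩
        · exact Or.inr ⟨d', x, rest, rfl, hx, rfl, hrest⟩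
      · rintro (⟨p', st'', rest, h, rfl, hrest⟩ | ⟨d'', x, rest, hd, hx, rfl, hrest⟩)
        · obtain ⟨rfl, rfl⟩ : p = p' ∧ st' = st'' := by simpa using h
          exact Or.inl ⟨rest, hrest, rfl⟩
        · obtain rfl : d'' = d' := by omega
          exact Or.inr ⟨x, hx, rest, hrest, rfl⟩

lemma card_validSeqs (Δ : ℕ) (hΔ : ∀ x, (nbr x).card ≤ Δ) :
    ∀ (L d : ℕ) (st : List α) (cur : α) (vis : Finset α),
      (validSeqs nbr L d st cur vis).card ≤ L.choose d * Δ ^ d := by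
  intro L
  induction L with
  | zero =>
    intro d st cur vis
    cases d with
    | zero => simp [validSeqs_zero]
    | succ d => simp [validSeqs_zero]
  | succ L ih =>
    intro d st cur vis
    rw [validSeqs_succ_eq]
    have h1 : (match st with
       | [] => (∅ : Finset (List (Option α)))
       | p :: st' => (validSeqs nbr L d st' p vis).image (List.cons none)).card ≤
        L.choose d * Δ ^ d := by
      cases st with
      | nil => simp
      | cons p st' => exact (Finset.card_image_le).trans (ih d st' p vis)
    cases d with
    | zero =>
      refine (Finset.card_union_le _ _).trans ?_
      simpa using h1
    | succ d' =>
      refine (Finset.card_union_le _ _).trans ?_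
      have h2 : ((nbr cur \ vis).biUnion fun x =>
          (validSeqs nbr L d' (cur :: st) x (insert x vis)).image (List.cons (some x))).card ≤
          Δ * (L.choose d' * Δ ^ d') := by
        refine (Finset.card_biUnion_le_card_mul _ _ (L.choose d' * Δ ^ d') ?_).trans ?_
        · intro x _
          exact (Finset.card_image_le).trans (ih d' (cur :: st) x (insert x vis))
        · exact Nat.mul_le_mul_right _ ((Finset.card_le_card Finset.sdiff_subset).trans (hΔ cur))
      refine (Nat.add_le_add h1 h2).trans ?_
      have e1 : Δ * (L.choose d' * Δ ^ d') = L.choose d' * Δ ^ (d' + 1) := by ring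
      rw [e1, Nat.choose_succ_succ' L d', Nat.add_mul]
      omega

lemma validSeqs_insert_vis {u : α} :
    ∀ {L d : ℕ} {st : List α} {cur : α} {vis : Finset α} {ms : List (Option α)},
      ms ∈ validSeqs nbr L d st cur vis → some u ∉ ms →
      ms ∈ validSeqs nbr L d st cur (insert u vis) := by
  intro L
  induction L with
  | zero =>
    intro d st cur vis ms h hu
    cases d with
    | zero => simpa [validSeqs_zero] using (by simpa [validSeqs_zero] using h : ms = [])
    | succ d => simp [validSeqs_zero] at h
  | succ L ih =>
    intro d st cur vis ms h hu
    rw [mem_validSeqs_succ] at h ⊢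
    rcases h with ⟨p, st', rest, hst, rfl, hrest⟩ | ⟨d', x, rest, hd, hx, rfl, hrest⟩
    · exact Or.inl ⟨p, st', rest, hst, rfl, ih hrest (by simpa using hu)⟩
    · have hxu : x ≠ u := by rintro rfl; simp at hu
      refine Or.inr ⟨d', x, rest, hd, ?_, rfl, ?_⟩
      · simp only [Finset.mem_sdiff] at hx ⊢
        exact ⟨hx.1, by simp [hxu, hx.2]⟩
      · rw [Finset.insert_comm]
        exact ih hrest (by intro hc; exact hu (by simp [hc]))

lemma validSeqs_front {u : α} {L d : ℕ} {st : List α} {cur : α} {vis : Finset α}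
    {ms : List (Option α)} (h : ms ∈ validSeqs nbr L d st cur vis)
    (hnbr : u ∈ nbr cur) (hvis : u ∉ vis) (hu : some u ∉ ms) :
    some u :: none :: ms ∈ validSeqs nbr (L + 2) (d + 1) st cur vis := by
  rw [mem_validSeqs_succ]
  refine Or.inr ⟨d, u, none :: ms, rfl, by simp [hnbr, hvis], rfl, ?_⟩
  rw [mem_validSeqs_succ]
  exact Or.inl ⟨cur, st, ms, rfl, rfl, validSeqs_insert_vis h hu⟩

lemma validSeqs_insert_after {u w : α} (hnbr : u ∈ nbr w) :
    ∀ {L d : ℕ} {st : List α} {cur : α} {vis : Finset α} {ms : List (Option α)},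
      ms ∈ validSeqs nbr L d st cur vis → u ∉ vis → some u ∉ ms →
      (w = cur ∨ some w ∈ ms) →
      ∃ ms', ms' ∈ validSeqs nbr (L + 2) (d + 1) st cur vis ∧
        ∀ x : α, (some x ∈ ms' ↔ some x ∈ ms ∨ x = u) := by
  intro L
  induction L with
  | zero =>
    intro d st cur vis ms h hvis hu hw
    cases d with
    | succ d => simp [validSeqs_zero] at h
    | zero =>
      obtain rfl : ms = [] := by simpa [validSeqs_zero] using h
      obtain rfl : w = cur := by rcases hw with h | h; exact h; simp at h
      exact ⟨some u :: none :: [], validSeqs_front h hnbr hvis hu, by simp⟩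
  | succ L ih =>
    intro d st cur vis ms h hvis hu hw
    rcases hw with rfl | hwms
    · exact ⟨some u :: none :: ms, validSeqs_front h hnbr hvis hu, by
        intro x; simp only [List.mem_cons]; constructor
        · rintro (hx | hx | hx)
          · exact Or.inr (by simpa using hx)
          · simp at hx
          · exact Or.inl hx
        · rintro (hx | rfl)
          · exact Or.inr (Or.inr hx)
          · exact Or.inl rfl⟩
    · rw [mem_validSeqs_succ] at h
      rcases h with ⟨p, st', rest, hst, rfl, hrest⟩ | ⟨d', x, rest, hd, hx, rfl, hrest⟩
      · have hwrest : some w ∈ rest := by simpa using hwms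
        obtain ⟨rest', hrest', hiff⟩ :=
          ih hrest hvis (by simpa using hu) (Or.inr hwrest)
        refine ⟨none :: rest', ?_, ?_⟩
        · rw [mem_validSeqs_succ]
          exact Or.inl ⟨p, st', rest', hst, rfl, hrest'⟩
        · intro x; simpa using hiff x
      · subst hd
        have hux : u ≠ x := by rintro rfl; simp at hu
        have hw' : w = x ∨ some w ∈ rest := by
          rcases (by simpa using hwms : w = x ∨ some w ∈ rest) with h | h
          · exact Or.inl h
          · exact Or.inr h
        obtain ⟨rest', hrest', hiff⟩ :=
          ih hrest (by simp [hvis, hux]) (fun hc => hu (List.mem_cons_of_mem _ hc))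
            (by rcases hw' with rfl | h; exact Or.inl rfl; exact Or.inr h)
        refine ⟨some x :: rest', ?_, ?_⟩
        · rw [mem_validSeqs_succ]
          exact Or.inr ⟨d' + 1, x, rest', rfl, hx, rfl, hrest'⟩
        · intro y
          simp only [List.mem_cons, Option.some.injEq]
          constructor
          · rintro (rfl | hy)
            · exact Or.inl (Or.inl rfl)
            · rcases (hiff y).1 hy with h | h
              · exact Or.inl (Or.inr h)
              · exact Or.inr h
          · rintro ((rfl | hy) | rfl)
            · exact Or.inl rfl
            · exact Or.inr ((hiff y).2 (Or.inl hy))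
            · exact Or.inr ((hiff y).2 (Or.inr rfl))

/-- Sets built by attaching one new neighbour at a time, starting from the root. -/
inductive Built (nbr : α → Finset α) (x₀ : α) : Finset α → Prop
  | base : Built nbr x₀ {x₀}
  | step {S : Finset α} {w u : α} : Built nbr x₀ S → w ∈ S → u ∈ nbr w → u ∉ S →
      Built nbr x₀ (insert u S)

lemma Built.root_mem {x₀ : α} {S : Finset α} (h : Built nbr x₀ S) : x₀ ∈ S := by
  induction h with
  | base => simp
  | step _ _ _ _ ih => simp [ih]

lemma exists_seq_of_built {x₀ : α} {S : Finset α} (h : Built nbr x₀ S) :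
    ∃ ms, ms ∈ validSeqs nbr (2 * (S.card - 1)) (S.card - 1) [] x₀ {x₀} ∧
      ∀ x : α, (some x ∈ ms ↔ x ∈ S ∧ x ≠ x₀) := by
  induction h with
  | base => exact ⟨[], by simp [validSeqs_zero], by simp⟩
  | @step S w u hS hw hu hus ih =>
    obtain ⟨ms, hms, hiff⟩ := ih
    have hx₀S : x₀ ∈ S := hS.root_mem
    have hcard : 1 ≤ S.card := Finset.card_pos.2 ⟨x₀, hx₀S⟩
    have hux₀ : u ≠ x₀ := by rintro rfl; exact hus hx₀S
    obtain ⟨ms', hms', hiff'⟩ := validSeqs_insert_after hu hms (by simp [hux₀])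
      (by rw [hiff]; rintro ⟨h1, _⟩; exact hus h1)
      (by rcases eq_or_ne w x₀ with rfl | hwx; exact Or.inl rfl
          exact Or.inr ((hiff w).2 ⟨hw, hwx⟩))
    refine ⟨ms', ?_, ?_⟩
    · have h1 : (insert u S).card - 1 = (S.card - 1) + 1 := by
        rw [Finset.card_insert_of_notMem hus]; omega
      rw [h1, show 2 * (S.card - 1 + 1) = 2 * (S.card - 1) + 2 from by ring]
      exact hms'
    · intro x
      rw [hiff' x, hiff x]
      constructor
      · rintro (⟨h1, h2⟩ | rfl)
        · exact ⟨Finset.mem_insert_of_mem h1, h2⟩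
        · exact ⟨Finset.mem_insert_self _ _, hux₀⟩
      · rintro ⟨h1, h2⟩
        rcases Finset.mem_insert.1 h1 with rfl | h1
        · exact Or.inr rfl
        · exact Or.inl ⟨h1, h2⟩

lemma built_of_conn {x₀ : α} {S : Finset α} (hx₀ : x₀ ∈ S)
    (hconn : ∀ y ∈ S, Relation.ReflTransGen (fun a c => c ∈ S ∧ c ∈ nbr a) x₀ y) :
    Built nbr x₀ S := by
  classical
  have key : ∀ (m : ℕ) (T : Finset α), Built nbr x₀ T → T ⊆ S → S.card ≤ T.card + m →
      Built nbr x₀ S := by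
    intro m
    induction m with
    | zero =>
      intro T hT hTS hc
      rwa [Finset.eq_of_subset_of_card_le hTS (by omega)] at hT
    | succ m ih =>
      intro T hT hTS hc
      by_cases hST : S ⊆ T
      · rwa [Finset.Subset.antisymm hTS hST] at hT
      · obtain ⟨y, hyS, hyT⟩ := Finset.not_subset.1 hST
        have cross : ∀ z : α, Relation.ReflTransGen (fun a c => c ∈ S ∧ c ∈ nbr a) x₀ z →
            z ∈ T ∨ ∃ u w, u ∈ S ∧ u ∉ T ∧ w ∈ T ∧ u ∈ nbr w := by
          intro z hz
          induction hz with
          | refl => exact Or.inl hT.root_mem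
          | @tail b c hb hbc ihz =>
            rcases ihz with hbT | hcross
            · by_cases hcT : c ∈ T
              · exact Or.inl hcT
              · exact Or.inr ⟨c, b, hbc.1, hcT, hbT, hbc.2⟩
            · exact Or.inr hcross
        rcases cross y (hconn y hyS) with h | ⟨u, w, huS, huT, hwT, hunbr⟩
        · exact absurd h hyT
        · refine ih (insert u T) (hT.step hwT hunbr huT) ?_ ?_
          · exact Finset.insert_subset huS hTS
          · rw [Finset.card_insert_of_notMem huT]; omega
  exact key S.card {x₀} Built.base (by simpa using hx₀) (by simp)

open scoped Classical in
lemma card_conn_le (x₀ : α) (U : Finset α) (b Δ : ℕ) (hΔ : ∀ x, (nbr x).card ≤ Δ) :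
    ((U.powersetCard b).filter (fun S => x₀ ∈ S ∧
        ∀ y ∈ S, Relation.ReflTransGen (fun a c => c ∈ S ∧ c ∈ nbr a) x₀ y)).card ≤
      (2 * (b - 1)).choose (b - 1) * Δ ^ (b - 1) := by
  classical
  refine (Finset.card_le_card_of_injOn
    (t := validSeqs nbr (2 * (b - 1)) (b - 1) [] x₀ {x₀})
    (fun S => if h : Built nbr x₀ S then (exists_seq_of_built h).choose else [])
    ?_ ?_).trans (card_validSeqs Δ hΔ _ _ _ _ _)
  · intro S hS
    simp only [Finset.mem_coe, Finset.mem_filter, Finset.mem_powersetCard] at hS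
    obtain ⟨⟨hsub, hcard⟩, hx₀, hconn⟩ := hS
    have hB : Built nbr x₀ S := built_of_conn hx₀ hconn
    dsimp only
    rw [dif_pos hB]
    subst hcard
    exact (exists_seq_of_built hB).choose_spec.1
  · intro S₁ h₁ S₂ h₂ heq
    simp only [Finset.coe_filter, Set.mem_setOf_eq, Finset.mem_powersetCard] at h₁ h₂
    have hB₁ : Built nbr x₀ S₁ := built_of_conn h₁.2.1 h₁.2.2
    have hB₂ : Built nbr x₀ S₂ := built_of_conn h₂.2.1 h₂.2.2
    dsimp only at heq
    rw [dif_pos hB₁, dif_pos hB₂] at heq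
    have s₁ := (exists_seq_of_built hB₁).choose_spec.2
    have s₂ := (exists_seq_of_built hB₂).choose_spec.2
    ext x
    rcases eq_or_ne x x₀ with rfl | hx
    · simp [h₁.2.1, h₂.2.1]
    · constructor
      · intro hxS
        exact ((s₂ x).1 (by rw [← heq]; exact (s₁ x).2 ⟨hxS, hx⟩)).1
      · intro hxS
        exact ((s₁ x).1 (by rw [heq]; exact (s₂ x).2 ⟨hxS, hx⟩)).1



variable {V : Type*} [DecidableEq V]

def share (J0 : Finset (Finset V)) (a b : Finset V) : Prop := ∃ I ∈ J0, I ⊆ a ∧ I ⊆ b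

def GoodChain (J0 E : Finset (Finset V)) (l : List (Finset V)) : Prop :=
  l.Chain' (share J0) ∧ ∀ x ∈ l, x ∈ E

lemma fin_to_list {E J0 : Finset (Finset V)} :
    ∀ (m : ℕ) (es : Fin (m + 1) → Finset V), (∀ i, es i ∈ E) →
      (∀ i : Fin m, share J0 (es i.castSucc) (es i.succ)) →
      ∃ (l : List (Finset V)) (h : l ≠ []),
        GoodChain J0 E l ∧ l.head h = es 0 ∧ l.getLast h = es (Fin.last m) := by
  intro m
  induction m with
  | zero =>
    intro es hmem _
    refine ⟨[es 0], by simp, ⟨List.isChain_singleton _, ?_⟩, rfl, rfl⟩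
    intro x hx
    rcases List.mem_singleton.1 hx with rfl
    exact hmem 0
  | succ m ih =>
    intro es hmem hsh
    obtain ⟨l, hne, ⟨hch, hmem'⟩, hhead, hlast⟩ := ih (fun i => es i.succ) (fun i => hmem _)
      (fun i => by
        have := hsh i.succ
        rwa [← Fin.succ_castSucc] at this)
    refine ⟨es 0 :: l, List.cons_ne_nil _ _, ⟨?_, ?_⟩, rfl, ?_⟩
    · rw [List.Chain', List.isChain_cons]
      refine ⟨?_, hch⟩
      intro y hy
      rw [List.head?_eq_head hne] at hy
      obtain rfl : l.head hne = y := Option.some_inj.1 hy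
      rw [hhead]
      simpa using hsh 0
    · intro x hx
      rcases List.mem_cons.1 hx with rfl | hx
      · exact hmem 0
      · exact hmem' x hx
    · rw [List.getLast_cons hne, hlast, Fin.succ_last]
  
lemma list_to_fin {E J0 : Finset (Finset V)} :
    ∀ (l : List (Finset V)) (h : l ≠ []), GoodChain J0 E l →
      ∃ (m : ℕ) (es : Fin (m + 1) → Finset V), (∀ i, es i ∈ E) ∧
        (∀ i : Fin m, share J0 (es i.castSucc) (es i.succ)) ∧
        es 0 = l.head h ∧ es (Fin.last m) = l.getLast h := by
  intro l
  induction l with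
  | nil => intro h; exact absurd rfl h
  | cons x l ih =>
    intro hne hgc
    obtain ⟨hch, hmem⟩ := hgc
    cases l with
    | nil =>
      exact ⟨0, fun _ => x, fun i => hmem x (by simp), fun i => i.elim0, rfl, rfl⟩
    | cons y rest =>
      obtain ⟨m, es, hmem', hsh, h0, hl⟩ := ih (by simp)
        ⟨(List.isChain_cons_cons.1 hch).2, fun z hz => hmem z (by simp [hz])⟩
      refine ⟨m + 1, Fin.cases x es, ?_, ?_, by simp, ?_⟩
      · intro i
        induction i using Fin.cases with
        | zero => simpa using hmem x (by simp)
        | succ j => simpa using hmem' j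
      · intro i
        induction i using Fin.cases with
        | zero =>
          have h1 : (Fin.cases x es : Fin (m+2) → Finset V) (0 : Fin (m+1)).castSucc = x := by
            simp
          have h2 : (Fin.cases x es : Fin (m+2) → Finset V) (0 : Fin (m+1)).succ = es 0 :=
            Fin.cases_succ 0
          rw [h1, h2, h0]
          exact (List.isChain_cons_cons.1 hch).1
        | succ j =>
          have h1 : (Fin.cases x es : Fin (m+2) → Finset V) j.succ.castSucc = es j.castSucc := by
            rw [← Fin.succ_castSucc]
            simp
          have h2 : (Fin.cases x es : Fin (m+2) → Finset V) j.succ.succ = es j.succ := by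
            simp
          rw [h1, h2]
          exact hsh j
      · have h1 : Fin.last (m + 1) = (Fin.last m).succ := (Fin.succ_last m).symm
        rw [h1]
        dsimp only
        rw [Fin.cases_succ, List.getLast_cons (by simp)]
        exact hl

lemma trav_exists_list {J0 E : Finset (Finset V)} (h : Trav J0 E) {A B : Finset V}
    (hA : A ∈ J0) (hB : B ∈ J0) (hAB : A ≠ B) :
    ∃ (l : List (Finset V)) (hne : l ≠ []),
      GoodChain J0 E l ∧ A ⊆ l.head hne ∧ B ⊆ l.getLast hne := by
  obtain ⟨m, es, hmem, hA', hB', hsh⟩ := h A hA B hB hAB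
  obtain ⟨l, hne, hgc, hh, hl⟩ := fin_to_list m es hmem hsh
  exact ⟨l, hne, hgc, by rw [hh]; exact hA', by rw [hl]; exact hB'⟩

lemma surgery {J0 E : Finset (Finset V)} {e : Finset V}
    (hH : ∀ I ∈ J0, ∀ I' ∈ J0, I ⊆ e → I' ⊆ e → I = I') :
    ∀ (l : List (Finset V)) (hne : l ≠ []) (A B : Finset V), A ∈ J0 → B ∈ J0 →
      GoodChain J0 E l → A ⊆ l.head hne → B ⊆ l.getLast hne →
      (∃ (l' : List (Finset V)) (hne' : l' ≠ []), GoodChain J0 (E.erase e) l' ∧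
        A ⊆ l'.head hne' ∧ B ⊆ l'.getLast hne') ∨ A = B := by
  intro l
  induction l with
  | nil => intro h; exact absurd rfl h
  | cons x l ih =>
    intro hne A B hA hB hgc hhead hlast
    obtain ⟨hch, hmem⟩ := hgc
    cases l with
    | nil =>
      by_cases hxe : x = e
      · subst hxe
        exact Or.inr (hH A hA B hB hhead hlast)
      · refine Or.inl ⟨[x], by simp, ⟨List.isChain_singleton _, ?_⟩, hhead, hlast⟩
        intro z hz
        rcases List.mem_singleton.1 hz with rfl
        exact Finset.mem_erase.2 ⟨hxe, hmem z (by simp)⟩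
    | cons y rest =>
      obtain ⟨I₁, hI₁, hI₁x, hI₁y⟩ := (List.isChain_cons_cons.1 hch).1
      have hch' : GoodChain J0 E (y :: rest) :=
        ⟨(List.isChain_cons_cons.1 hch).2, fun z hz => hmem z (by simp [hz])⟩
      have hlast' : B ⊆ (y :: rest).getLast (by simp) := by
        rwa [List.getLast_cons (by simp)] at hlast
      by_cases hxe : x = e
      · have hIA : I₁ = A := hH I₁ hI₁ A hA (hxe ▸ hI₁x) (hxe ▸ hhead)
        have hAy : A ⊆ y := hIA ▸ hI₁y
        exact ih (by simp) A B hA hB hch' hAy hlast'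
      · rcases ih (by simp) I₁ B hI₁ hB hch' hI₁y hlast' with ⟨l', hne', hgc', hh', hl'⟩ | hIB
        · refine Or.inl ⟨x :: l', List.cons_ne_nil _ _, ⟨?_, ?_⟩, hhead, ?_⟩
          · rw [List.Chain', List.isChain_cons]
            refine ⟨?_, hgc'.1⟩
            intro z hz
            rw [List.head?_eq_head hne'] at hz
            obtain rfl : l'.head hne' = z := Option.some_inj.1 hz
            exact ⟨I₁, hI₁, hI₁x, hh'⟩
          · intro z hz
            rcases List.mem_cons.1 hz with rfl | hz
            · exact Finset.mem_erase.2 ⟨hxe, hmem z (by simp)⟩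
            · exact hgc'.2 z hz
          · rw [List.getLast_cons hne']
            exact hl'
        · refine Or.inl ⟨[x], by simp, ⟨List.isChain_singleton _, ?_⟩, hhead, by simpa using hIB ▸ hI₁x⟩
          intro z hz
          rcases List.mem_singleton.1 hz with rfl
          exact Finset.mem_erase.2 ⟨hxe, hmem z (by simp)⟩

lemma trav_erase {J0 E : Finset (Finset V)} {e : Finset V} (hT : Trav J0 E)
    (hH : ∀ I ∈ J0, ∀ I' ∈ J0, I ⊆ e → I' ⊆ e → I = I') : Trav J0 (E.erase e) := by
  intro A hA B hB hAB
  obtain ⟨l, hne, hgc, hh, hl⟩ := trav_exists_list hT hA hB hAB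
  rcases surgery hH l hne A B hA hB hgc hh hl with ⟨l', hne', hgc', hh', hl'⟩ | rfl
  · obtain ⟨m, es, hmem, hsh, h0, hlast⟩ := list_to_fin l' hne' hgc'
    exact ⟨m, es, hmem, by rw [h0]; exact hh', by rw [hlast]; exact hl', hsh⟩
  · exact absurd rfl hAB

/-- Every edge of an edge-minimal traversable pair contains two distinct members of `J0`. -/
lemma two_js {J0 E : Finset (Finset V)} {e : Finset V} (hT : Trav J0 E)
    (hmin : ¬ Trav J0 (E.erase e)) :
    ∃ I ∈ J0, ∃ I' ∈ J0, I ≠ I' ∧ I ⊆ e ∧ I' ⊆ e := by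
  by_contra hc
  push_neg at hc
  refine hmin (trav_erase hT ?_)
  intro I hI I' hI' hIe hI'e
  by_contra hne
  exact (hc I hI I' hI' hne) hIe hI'e

lemma covers {J0 E : Finset (Finset V)} (h : Trav J0 E) (hcard : 2 ≤ J0.card)
    {A : Finset V} (hA : A ∈ J0) : ∃ f ∈ E, A ⊆ f := by
  obtain ⟨B, hB, hBA⟩ := Finset.exists_mem_ne (show 1 < J0.card by omega) A
  obtain ⟨m, es, hmem, hA', _, _⟩ := h A hA B hB (Ne.symm hBA)
  exact ⟨es 0, hmem 0, hA'⟩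

lemma chain_rtg {J0 E2 : Finset (Finset V)} (rel : Finset V → Finset V → Prop)
    (hrel : ∀ a c, a ∈ E2 → c ∈ E2 → share J0 a c → rel a c) :
    ∀ (l : List (Finset V)) (hne : l ≠ []), GoodChain J0 E2 l →
      Relation.ReflTransGen rel (l.head hne) (l.getLast hne) := by
  intro l
  induction l with
  | nil => intro h; exact absurd rfl h
  | cons x l ih =>
    intro hne hgc
    obtain ⟨hch, hmem⟩ := hgc
    cases l with
    | nil => exact Relation.ReflTransGen.refl
    | cons y rest =>
      have h1 : rel x y := hrel x y (hmem x (by simp)) (hmem y (by simp)) (List.isChain_cons_cons.1 hch).1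
      have h2 := ih (by simp) ⟨(List.isChain_cons_cons.1 hch).2, fun z hz => hmem z (by simp [hz])⟩
      rw [List.getLast_cons (by simp)]
      exact Relation.ReflTransGen.head h1 h2



section Counting

lemma choose_le_two_pow (n k : ℕ) : n.choose k ≤ 2 ^ n := by
  rcases le_or_gt n k with h | h
  · rcases eq_or_lt_of_le h with rfl | h'
    · calc n.choose n = 1 := Nat.choose_self n
        _ ≤ 2 ^ n := Nat.one_le_two_pow
    · simp [Nat.choose_eq_zero_of_lt h']
  · calc n.choose k ≤ ∑ i ∈ Finset.range (n + 1), n.choose i :=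
        Finset.single_le_sum (fun i _ => Nat.zero_le _) (Finset.mem_range.2 (by omega))
      _ = 2 ^ n := Nat.sum_range_choose n

lemma pow_self_le_three_pow_mul_factorial : ∀ r : ℕ, ((r : ℝ)) ^ r ≤ 3 ^ r * (r.factorial : ℝ) := by
  intro r
  induction r with
  | zero => simp
  | succ r ih =>
    have h3 : ((r + 1 : ℕ) : ℝ) ^ r ≤ 3 * (r : ℝ) ^ r := by
      rcases Nat.eq_zero_or_pos r with rfl | hr
      · norm_num
      · have hr0 : (0 : ℝ) < r := by exact_mod_cast hr
        have h1 : ((r : ℝ) + 1) = r * (1 + 1 / r) := by field_simp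
        have h2 : (1 + 1 / (r : ℝ)) ≤ Real.exp (1 / r) := by
          have := Real.add_one_le_exp (1 / (r : ℝ)); linarith
        have h4 : (1 + 1 / (r : ℝ)) ^ r ≤ Real.exp (1 / r) ^ r :=
          pow_le_pow_left₀ (by positivity) h2 r
        have h5 : Real.exp (1 / (r : ℝ)) ^ r = Real.exp (r * (1 / r)) :=
          (Real.exp_nat_mul _ r).symm
        have h6 : (r : ℝ) * (1 / r) = 1 := by field_simp
        have h7 : Real.exp 1 ≤ 3 := by
          have := Real.exp_one_lt_d9; linarith
        have h8 : (1 + 1 / (r : ℝ)) ^ r ≤ 3 := by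
          rw [h6] at h5; rw [h5] at h4; linarith
        calc ((r + 1 : ℕ) : ℝ) ^ r = ((r : ℝ) * (1 + 1 / r)) ^ r := by push_cast; rw [← h1]
          _ = (r : ℝ) ^ r * (1 + 1 / r) ^ r := mul_pow _ _ _
          _ ≤ (r : ℝ) ^ r * 3 := by
            refine mul_le_mul_of_nonneg_left h8 (by positivity)
          _ = 3 * (r : ℝ) ^ r := by ring
    have hnn : (0 : ℝ) ≤ ((r : ℝ) + 1) := by positivity
    calc ((r + 1 : ℕ) : ℝ) ^ (r + 1) = ((r + 1 : ℕ) : ℝ) ^ r * ((r + 1 : ℕ) : ℝ) := pow_succ _ _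
      _ ≤ (3 * (r : ℝ) ^ r) * ((r : ℝ) + 1) := by
          refine mul_le_mul h3 (by push_cast; linarith) (by positivity) (by positivity)
      _ ≤ (3 * (3 ^ r * (r.factorial : ℝ))) * ((r : ℝ) + 1) := by
          refine mul_le_mul_of_nonneg_right (mul_le_mul_of_nonneg_left ih (by norm_num)) hnn
      _ = 3 ^ (r + 1) * (((r : ℝ) + 1) * (r.factorial : ℝ)) := by ring
      _ = 3 ^ (r + 1) * ((r + 1).factorial : ℝ) := by
          rw [Nat.factorial_succ]; push_cast; ring

lemma key_choose_bound (M L X Q r : ℕ) (hM : M ≤ L * L * X) (hL : L ≤ Q * r) :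
    ((M.choose r : ℕ) : ℝ) ≤ ((L : ℝ) * (X : ℝ)) ^ r * (3 * (Q : ℝ)) ^ r := by
  have hfac : (0 : ℝ) < (r.factorial : ℝ) := by exact_mod_cast r.factorial_pos
  have h0 : ((M.choose r : ℕ) : ℝ) ≤ ((M : ℝ)) ^ r / (r.factorial : ℝ) := by
    have := Nat.choose_le_pow_div (α := ℝ) r M
    push_cast at this ⊢
    convert this using 2
  have h1 : ((M : ℝ)) ^ r ≤ (((L : ℝ) * L * X)) ^ r := by
    refine pow_le_pow_left₀ (by positivity) ?_ r
    exact_mod_cast hM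
  have h2 : (((L : ℝ) * L * X)) ^ r = ((L : ℝ) * X) ^ r * (L : ℝ) ^ r := by
    rw [← mul_pow]; ring_nf
  have h3 : ((L : ℝ)) ^ r ≤ ((Q : ℝ) * r) ^ r := by
    refine pow_le_pow_left₀ (by positivity) ?_ r
    exact_mod_cast hL
  have h4 : ((Q : ℝ) * r) ^ r = (Q : ℝ) ^ r * (r : ℝ) ^ r := mul_pow _ _ _
  have h5 : (r : ℝ) ^ r ≤ 3 ^ r * (r.factorial : ℝ) := pow_self_le_three_pow_mul_factorial r
  have hLX : (0:ℝ) ≤ ((L : ℝ) * X) ^ r := by positivity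
  calc ((M.choose r : ℕ) : ℝ) ≤ ((M : ℝ)) ^ r / (r.factorial : ℝ) := h0
    _ ≤ (((L : ℝ) * L * X)) ^ r / (r.factorial : ℝ) := by gcongr
    _ = ((L : ℝ) * X) ^ r * ((L : ℝ) ^ r / (r.factorial : ℝ)) := by rw [h2]; ring
    _ ≤ ((L : ℝ) * X) ^ r * (((Q : ℝ) ^ r * (r : ℝ) ^ r) / (r.factorial : ℝ)) := by
        refine mul_le_mul_of_nonneg_left ?_ hLX
        rw [← h4]
        gcongr
    _ ≤ ((L : ℝ) * X) ^ r * (((Q : ℝ) ^ r * (3 ^ r * (r.factorial : ℝ))) / (r.factorial : ℝ)) := by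
        refine mul_le_mul_of_nonneg_left ?_ hLX
        gcongr
    _ = ((L : ℝ) * X) ^ r * ((Q : ℝ) ^ r * 3 ^ r) := by
        field_simp
    _ = ((L : ℝ) * X) ^ r * (3 * (Q : ℝ)) ^ r := by
        rw [mul_pow]; ring

variable {V : Type*} [DecidableEq V] [Fintype V]

lemma card_supersets (W : Finset V) (k : ℕ) :
    (((Finset.univ : Finset V).powersetCard k).filter (fun e => W ⊆ e)).card ≤
      (Fintype.card V).choose (k - W.card) := by
  classical
  have hle : (((Finset.univ : Finset V).powersetCard k).filter (fun e => W ⊆ e)).card ≤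
      ((Finset.univ : Finset V).powersetCard (k - W.card)).card := by
    refine Finset.card_le_card_of_injOn (fun e => e \ W) ?_ ?_
    · intro e he
      simp only [Finset.mem_coe, Finset.mem_filter, Finset.mem_powersetCard] at he
      obtain ⟨⟨_, hcard⟩, hW⟩ := he
      simp only [Finset.mem_coe, Finset.mem_powersetCard]
      exact ⟨Finset.subset_univ _, by rw [Finset.card_sdiff_of_subset hW, hcard]⟩
    · intro e₁ h₁ e₂ h₂ heq
      simp only [Finset.coe_filter, Set.mem_setOf_eq, Finset.mem_powersetCard] at h₁ h₂
      have := congrArg (fun s => s ∪ W) heq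
      simpa [Finset.sdiff_union_of_subset h₁.2, Finset.sdiff_union_of_subset h₂.2] using this
  simpa [Finset.card_powersetCard] using hle

/-- neighbourhood function on `k`-sets: all `k`-sets meeting in at least `j` points. -/
def nbrF (k j : ℕ) : Finset V → Finset (Finset V) := fun e =>
  if e.card = k then ((Finset.univ : Finset V).powersetCard k).filter
    (fun f => j ≤ (e ∩ f).card) else ∅

lemma nbrF_card_le (k j : ℕ) (hjk : j ≤ k) (e : Finset V) :
    (nbrF k j e).card ≤ k.choose j * (Fintype.card V).choose (k - j) := by
  classical
  rw [nbrF]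
  by_cases he : e.card = k
  · rw [if_pos he]
    have hsub : ((Finset.univ : Finset V).powersetCard k).filter (fun f => j ≤ (e ∩ f).card) ⊆
        (e.powersetCard j).biUnion (fun I =>
          ((Finset.univ : Finset V).powersetCard k).filter (fun f => I ⊆ f)) := by
      intro f hf
      simp only [Finset.mem_filter] at hf
      obtain ⟨I, hIsub, hIcard⟩ := Finset.exists_subset_card_eq hf.2
      refine Finset.mem_biUnion.2 ⟨I, ?_, ?_⟩
      · exact Finset.mem_powersetCard.2 ⟨hIsub.trans Finset.inter_subset_left, hIcard⟩
      · exact Finset.mem_filter.2 ⟨hf.1, hIsub.trans Finset.inter_subset_right⟩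
    refine (Finset.card_le_card hsub).trans ?_
    refine (Finset.card_biUnion_le_card_mul _ _ ((Fintype.card V).choose (k - j)) ?_).trans ?_
    · intro I hI
      have hIc : I.card = j := (Finset.mem_powersetCard.1 hI).2
      have := card_supersets I k
      rwa [hIc] at this
    · rw [Finset.card_powersetCard, he]
  · rw [if_neg he]; simp

end Counting

section Structure

variable {V : Type*} [DecidableEq V] [Fintype V]

lemma conn_of_minimal {k j : ℕ} {J0 E2 : Finset (Finset V)}
    (hJ0j : ∀ A ∈ J0, (A : Finset V).card = j)
    (hE2k : E2 ⊆ (Finset.univ : Finset V).powersetCard k)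
    (ht : Trav J0 E2) (hmin : ∀ e ∈ E2, ¬ Trav J0 (E2.erase e))
    {e₀ : Finset V} (he₀ : e₀ ∈ E2) :
    ∀ f ∈ E2, Relation.ReflTransGen (fun a c => c ∈ E2 ∧ c ∈ nbrF k j a) e₀ f := by
  classical
  intro f hf
  set rel : Finset V → Finset V → Prop := fun a c => c ∈ E2 ∧ c ∈ nbrF k j a with hrel_def
  have hrel : ∀ a c : Finset V, a ∈ E2 → c ∈ E2 → share J0 a c → rel a c := by
    rintro a c ha hc ⟨I, hI, hIa, hIc⟩
    refine ⟨hc, ?_⟩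
    rw [nbrF, if_pos (Finset.mem_powersetCard.1 (hE2k ha)).2]
    refine Finset.mem_filter.2 ⟨hE2k hc, ?_⟩
    calc j = I.card := (hJ0j I hI).symm
      _ ≤ (a ∩ c).card := Finset.card_le_card (Finset.subset_inter hIa hIc)
  obtain ⟨I₀, hI₀, _, _, _, hI₀e₀, _⟩ := two_js ht (hmin e₀ he₀)
  obtain ⟨If, hIf, _, _, _, hIff, _⟩ := two_js ht (hmin f hf)
  by_cases hII : I₀ = If
  · exact Relation.ReflTransGen.single (hrel e₀ f he₀ hf ⟨I₀, hI₀, hI₀e₀, hII ▸ hIff⟩)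
  · obtain ⟨l, hne, hgc, hh, hl⟩ := trav_exists_list ht hI₀ hIf hII
    have hhead_mem : l.head hne ∈ E2 := hgc.2 _ (List.head_mem hne)
    have hlast_mem : l.getLast hne ∈ E2 := hgc.2 _ (List.getLast_mem hne)
    have step1 : rel e₀ (l.head hne) := hrel _ _ he₀ hhead_mem ⟨I₀, hI₀, hI₀e₀, hh⟩
    have step2 : Relation.ReflTransGen rel (l.head hne) (l.getLast hne) :=
      chain_rtg rel hrel l hne hgc
    have step3 : rel (l.getLast hne) f := hrel _ _ hlast_mem hf ⟨If, hIf, hl, hIff⟩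
    exact Relation.ReflTransGen.head step1 (step2.trans (Relation.ReflTransGen.single step3))

end Structure


end MTTaux

set_option maxHeartbeats 1000000 in
/-- **Remark (colours exchanged).** Let `1 ≤ j ≤ k−1`.  There is a constant `C = C(k,j) > 0`
such that for every finite set `V` and all integers `ℓ > r ≥ 0`, `ℓ > b ≥ 0`, the number of
edge-minimal traversable triples on `V` of size `ℓ` with `r` red and `b` blue edges also
satisfies `|T_{ℓ,r,b}| ≤ |V|^j · C^{ℓ−1} · (|V|^{k−j})^b · (ℓ·|V|^{k−j−1})^r`. -/
theorem minTravTriples_card_upper_bound_swapped (k j : ℕ) (hj : 1 ≤ j) (hjk : j ≤ k - 1) :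
    ∃ C : ℝ, 0 < C ∧
      ∀ (V : Type) [DecidableEq V] [Fintype V], ∀ ℓ r b : ℕ, r < ℓ → b < ℓ →
        ((minTravTriples k j V ℓ r b).ncard : ℝ) ≤
          (Fintype.card V : ℝ) ^ j * C ^ (ℓ - 1) *
            ((Fintype.card V : ℝ) ^ (k - j)) ^ b *
            ((ℓ : ℝ) * (Fintype.card V : ℝ) ^ (k - j - 1)) ^ r := by
  classical
  have hk2 : 2 ≤ k := by omega
  set q : ℕ := k.choose j with hqdef
  have hq1 : 1 ≤ q := Nat.choose_pos (by omega)
  have hq1R : (1 : ℝ) ≤ (q : ℝ) := by exact_mod_cast hq1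
  have h2q : (1 : ℝ) ≤ (2 : ℝ) ^ q := one_le_pow₀ (by norm_num)
  have hq0 : (0 : ℝ) < (q : ℝ) := by exact_mod_cast hq1
  have one_le_mul' : ∀ x y : ℝ, 1 ≤ x → 1 ≤ y → 1 ≤ x * y := fun x y hx hy => by nlinarith
  have hC1 : (1 : ℝ) ≤ 4 * 2 ^ q * (q : ℝ) * (3 * q) :=
    one_le_mul' _ _ (one_le_mul' _ _ (one_le_mul' _ _ (by norm_num) h2q) hq1R)
      (by linarith)
  refine ⟨4 * 2 ^ q * q * (3 * q), by linarith, ?_⟩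
  intro V _ _ ℓ r b hr hb
  set n := Fintype.card V with hn
  have hRHS0 : (0 : ℝ) ≤ (n : ℝ) ^ j * (4 * 2 ^ q * (q : ℝ) * (3 * q)) ^ (ℓ - 1) *
      ((n : ℝ) ^ (k - j)) ^ b * ((ℓ : ℝ) * (n : ℝ) ^ (k - j - 1)) ^ r := by positivity
  by_cases hl1 : ℓ = 1
  · subst hl1
    obtain rfl : r = 0 := by omega
    obtain rfl : b = 0 := by omega
    have hsub : minTravTriples k j V 1 0 0 ⊆
        ↑(((Finset.univ : Finset V).powersetCard j).image
          (fun A => (({A} : Finset (Finset V)), (∅ : Finset (Finset V)),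
            (∅ : Finset (Finset V))))) := by
      rintro ⟨J0, E1, E2⟩ ⟨h1, h2, h3, _, hc1, hc2, hc3⟩
      obtain ⟨A, rfl⟩ := Finset.card_eq_one.1 hc1
      obtain rfl := Finset.card_eq_zero.1 hc2
      obtain rfl := Finset.card_eq_zero.1 hc3
      simp only [Finset.coe_image, Set.mem_image, Finset.mem_coe]
      exact ⟨A, h1 (Finset.mem_singleton_self A), rfl⟩
    have h1 : (minTravTriples k j V 1 0 0).ncard ≤
        (((Finset.univ : Finset V).powersetCard j).image
          (fun A => (({A} : Finset (Finset V)), (∅ : Finset (Finset V)),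
            (∅ : Finset (Finset V))))).card := by
      rw [← Set.ncard_coe_finset]
      exact Set.ncard_le_ncard hsub (Finset.finite_toSet _)
    have h2 : (((Finset.univ : Finset V).powersetCard j).image
          (fun A => (({A} : Finset (Finset V)), (∅ : Finset (Finset V)),
            (∅ : Finset (Finset V))))).card ≤ n ^ j := by
      refine Finset.card_image_le.trans ?_
      rw [Finset.card_powersetCard, Finset.card_univ]
      exact Nat.choose_le_pow n j
    calc ((minTravTriples k j V 1 0 0).ncard : ℝ) ≤ ((n ^ j : ℕ) : ℝ) := by
          exact_mod_cast h1.trans h2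
      _ = (n : ℝ) ^ j := by push_cast; rfl
      _ ≤ _ := by simp
  · have hl2 : 2 ≤ ℓ := by omega
    rcases Set.eq_empty_or_nonempty (minTravTriples k j V ℓ r b) with he | ⟨t₀, ht₀⟩
    · rw [he]; simpa using hRHS0
    set Pk : Finset (Finset V) := (Finset.univ : Finset V).powersetCard k with hPk
    obtain ⟨hJ1, hE1k, hE2k, ⟨⟨htrav1, htrav2⟩, hmin1, hmin2⟩, hJc, hE1c, hE2c⟩ := ht₀
    have hJ0j : ∀ A ∈ t₀.1, A.card = j := fun A hA => (Finset.mem_powersetCard.1 (hJ1 hA)).2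
    have hn1 : 1 ≤ n := by
      obtain ⟨A, hA⟩ := Finset.card_pos.1 (show 0 < t₀.1.card by omega)
      obtain ⟨x, _⟩ := Finset.card_pos.1 (show 0 < A.card by rw [hJ0j A hA]; omega)
      rw [hn]
      exact Fintype.card_pos_iff.2 ⟨x⟩
    have cover_le : ∀ E : Finset (Finset V), E ⊆ Pk → Trav t₀.1 E → ℓ ≤ E.card * q := by
      intro E hEk htravE
      have hsub : t₀.1 ⊆ E.biUnion (fun e => e.powersetCard j) := by
        intro A hA
        obtain ⟨f, hf, hAf⟩ := MTTaux.covers htravE (show 2 ≤ t₀.1.card by omega) hA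
        exact Finset.mem_biUnion.2 ⟨f, hf, Finset.mem_powersetCard.2 ⟨hAf, hJ0j A hA⟩⟩
      calc ℓ = t₀.1.card := hJc.symm
        _ ≤ (E.biUnion (fun e => e.powersetCard j)).card := Finset.card_le_card hsub
        _ ≤ E.card * q := by
            refine Finset.card_biUnion_le_card_mul _ _ q ?_
            intro e he
            rw [Finset.card_powersetCard, (Finset.mem_powersetCard.1 (hEk he)).2]
    have hlr : ℓ ≤ r * q := by
      have := cover_le t₀.2.1 hE1k htrav1; rwa [hE1c] at this
    have hlb : ℓ ≤ b * q := by
      have := cover_le t₀.2.2 hE2k htrav2; rwa [hE2c] at this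
    obtain ⟨b', rfl⟩ : ∃ b', b = b' + 1 := by
      refine ⟨b - 1, ?_⟩
      rcases Nat.eq_zero_or_pos b with rfl | hbp
      · simp at hlb; omega
      · omega
    set nbr : Finset V → Finset (Finset V) := MTTaux.nbrF k j with hnbrdef
    have hΔ : ∀ e : Finset V, (nbr e).card ≤ q * n.choose (k - j) := fun e =>
      MTTaux.nbrF_card_le k j (by omega) e
    set BB : Finset (Finset (Finset V)) := (Pk.powersetCard (b' + 1)).filter
      (fun S => ∃ x₀ ∈ S, ∀ y ∈ S,
        Relation.ReflTransGen (fun a c => c ∈ S ∧ c ∈ nbr a) x₀ y) with hBBdef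
    set candJ : Finset (Finset V) → Finset (Finset V) :=
      fun E2 => E2.biUnion (fun e => e.powersetCard j) with hcandJdef
    set candRed : Finset (Finset V) → Finset (Finset V) := fun J0 =>
      Pk.filter (fun e => ∃ A ∈ J0, ∃ B' ∈ J0, A ≠ B' ∧ A ⊆ e ∧ B' ⊆ e) with hcandReddef
    set Big := BB.biUnion (fun E2 => ((candJ E2).powersetCard ℓ).biUnion (fun J0 =>
      ((candRed J0).powersetCard r).image (fun E1 => (J0, E1, E2)))) with hBigdef
    have hTsub : minTravTriples k j V ℓ r (b' + 1) ⊆ ↑Big := by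
      rintro ⟨J0, E1, E2⟩ ⟨h1, h2, h3, ⟨⟨ht1, ht2⟩, hm1, hm2⟩, hc1, hc2, hc3⟩
      dsimp only at h1 h2 h3 ht1 ht2 hm1 hm2 hc1 hc2 hc3
      have hJ0j' : ∀ A ∈ J0, A.card = j := fun A hA => (Finset.mem_powersetCard.1 (h1 hA)).2
      have hE2B : E2 ∈ BB := by
        refine Finset.mem_filter.2 ⟨Finset.mem_powersetCard.2 ⟨h3, hc3⟩, ?_⟩
        obtain ⟨e₀, he₀⟩ := Finset.card_pos.1 (show 0 < E2.card by omega)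
        exact ⟨e₀, he₀, MTTaux.conn_of_minimal hJ0j' h3 ht2 hm2 he₀⟩
      refine Finset.mem_coe.2 (Finset.mem_biUnion.2 ⟨E2, hE2B, ?_⟩)
      refine Finset.mem_biUnion.2 ⟨J0, ?_, ?_⟩
      · refine Finset.mem_powersetCard.2 ⟨?_, hc1⟩
        intro A hA
        obtain ⟨f, hf, hAf⟩ := MTTaux.covers ht2 (show 2 ≤ J0.card by omega) hA
        exact Finset.mem_biUnion.2 ⟨f, hf, Finset.mem_powersetCard.2 ⟨hAf, hJ0j' A hA⟩⟩
      · refine Finset.mem_image.2 ⟨E1, ?_, rfl⟩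
        refine Finset.mem_powersetCard.2 ⟨?_, hc2⟩
        intro e he
        obtain ⟨I, hI, I', hI', hne, hIe, hI'e⟩ := MTTaux.two_js ht1 (hm1 e he)
        exact Finset.mem_filter.2 ⟨h2 he, ⟨I, hI, I', hI', hne, hIe, hI'e⟩⟩
    have hcandRed_le : ∀ E2 ∈ BB, ∀ J0 ∈ (candJ E2).powersetCard ℓ,
        (candRed J0).card ≤ ℓ * (ℓ * n ^ (k - j - 1)) := by
      intro E2 _ J0 hJ0
      obtain ⟨hJ0sub, hJ0card⟩ := Finset.mem_powersetCard.1 hJ0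
      have hJ0j' : ∀ A ∈ J0, A.card = j := by
        intro A hA
        obtain ⟨e, _, hAe⟩ := Finset.mem_biUnion.1 (hJ0sub hA)
        exact (Finset.mem_powersetCard.1 hAe).2
      have hsub : candRed J0 ⊆ J0.biUnion (fun A => J0.biUnion (fun B' =>
          Pk.filter (fun e => A ∪ B' ⊆ e ∧ A ≠ B'))) := by
        intro e he
        obtain ⟨hePk, A, hA, B', hB', hAB, hAe, hB'e⟩ := Finset.mem_filter.1 he
        exact Finset.mem_biUnion.2 ⟨A, hA, Finset.mem_biUnion.2 ⟨B', hB',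
          Finset.mem_filter.2 ⟨hePk, Finset.union_subset hAe hB'e, hAB⟩⟩⟩
      refine (Finset.card_le_card hsub).trans ?_
      rw [← hJ0card]
      refine Finset.card_biUnion_le_card_mul _ _ _ ?_
      intro A hA
      refine Finset.card_biUnion_le_card_mul _ _ _ ?_
      intro B' hB'
      by_cases hAB : A = B'
      · refine le_trans (le_of_eq (Finset.card_eq_zero.2 ?_)) (Nat.zero_le _)
        refine Finset.filter_eq_empty_iff.2 ?_
        intro e _
        simp [hAB]
      · have hW : j + 1 ≤ (A ∪ B').card := by
          have hA' : A.card = j := hJ0j' A hA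
          have hB'' : B'.card = j := hJ0j' B' hB'
          have hss : A ⊂ A ∪ B' := by
            refine Finset.ssubset_iff_subset_ne.2 ⟨Finset.subset_union_left, ?_⟩
            intro hEq
            have hsubBA : B' ⊆ A := by rw [hEq]; exact Finset.subset_union_right
            exact hAB (Finset.eq_of_subset_of_card_le hsubBA (by omega)).symm
          have := Finset.card_lt_card hss
          omega
        have hsub2 : Pk.filter (fun e => A ∪ B' ⊆ e ∧ A ≠ B') ⊆
            Pk.filter (fun e => A ∪ B' ⊆ e) := by
          intro e he
          obtain ⟨h1', h2', _⟩ := Finset.mem_filter.1 he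
          exact Finset.mem_filter.2 ⟨h1', h2'⟩
        refine ((Finset.card_le_card hsub2).trans (MTTaux.card_supersets (A ∪ B') k)).trans ?_
        refine (Nat.choose_le_pow _ _).trans ?_
        exact Nat.pow_le_pow_right hn1 (by omega)
    have hcandJ_le : ∀ E2 ∈ BB, (candJ E2).card ≤ (b' + 1) * q := by
      intro E2 hE2
      obtain ⟨hE2sub, hE2card⟩ := Finset.mem_powersetCard.1 (Finset.mem_filter.1 hE2).1
      rw [← hE2card]
      refine Finset.card_biUnion_le_card_mul _ _ q ?_
      intro e he
      rw [Finset.card_powersetCard, (Finset.mem_powersetCard.1 (hE2sub he)).2]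
    have hBig_le : Big.card ≤ BB.card *
        (2 ^ (q * (b' + 1)) * ((ℓ * (ℓ * n ^ (k - j - 1))).choose r)) := by
      refine Finset.card_biUnion_le_card_mul _ _ _ ?_
      intro E2 hE2
      refine (Finset.card_biUnion_le_card_mul _ _ ((ℓ * (ℓ * n ^ (k - j - 1))).choose r)
        ?_).trans ?_
      · intro J0 hJ0
        refine Finset.card_image_le.trans ?_
        rw [Finset.card_powersetCard]
        exact Nat.choose_le_choose r (hcandRed_le E2 hE2 J0 hJ0)
      · refine Nat.mul_le_mul_right _ ?_
        rw [Finset.card_powersetCard]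
        refine (MTTaux.choose_le_two_pow _ _).trans ?_
        refine Nat.pow_le_pow_right (by norm_num) ?_
        calc (candJ E2).card ≤ (b' + 1) * q := hcandJ_le E2 hE2
          _ = q * (b' + 1) := Nat.mul_comm _ _
    have hBB_le : BB.card ≤ n.choose k *
        ((2 * b').choose b' * (q * n.choose (k - j)) ^ b') := by
      have hsub : BB ⊆ Pk.biUnion (fun x₀ => (Pk.powersetCard (b' + 1)).filter
          (fun S => x₀ ∈ S ∧ ∀ y ∈ S,
            Relation.ReflTransGen (fun a c => c ∈ S ∧ c ∈ nbr a) x₀ y)) := by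
        intro S hS
        obtain ⟨hSmem, x₀, hx₀, hconn⟩ := Finset.mem_filter.1 hS
        exact Finset.mem_biUnion.2 ⟨x₀, (Finset.mem_powersetCard.1 hSmem).1 hx₀,
          Finset.mem_filter.2 ⟨hSmem, hx₀, hconn⟩⟩
      refine (Finset.card_le_card hsub).trans ?_
      refine (Finset.card_biUnion_le_card_mul _ _
        ((2 * b').choose b' * (q * n.choose (k - j)) ^ b') ?_).trans ?_
      · intro x₀ _
        have h := MTTaux.card_conn_le (nbr := nbr) x₀ Pk (b' + 1) (q * n.choose (k - j)) hΔ
        simp only [Nat.add_sub_cancel] at h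
        convert h using 2
        ext S
        simp only [Finset.mem_filter]
      · refine Nat.mul_le_mul_right _ ?_
        rw [hPk, Finset.card_powersetCard, Finset.card_univ]
    have htotal : (minTravTriples k j V ℓ r (b' + 1)).ncard ≤
        n.choose k * ((2 * b').choose b' * (q * n.choose (k - j)) ^ b') *
        (2 ^ (q * (b' + 1)) * ((ℓ * (ℓ * n ^ (k - j - 1))).choose r)) := by
      calc (minTravTriples k j V ℓ r (b' + 1)).ncard ≤ Big.card := by
            rw [← Set.ncard_coe_finset]
            exact Set.ncard_le_ncard hTsub (Finset.finite_toSet _)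
        _ ≤ BB.card * (2 ^ (q * (b' + 1)) * ((ℓ * (ℓ * n ^ (k - j - 1))).choose r)) := hBig_le
        _ ≤ _ := Nat.mul_le_mul_right _ hBB_le
    -- now the real-number chain
    have hN1 : (1 : ℝ) ≤ (n : ℝ) := by exact_mod_cast hn1
    have c1 : ((n.choose k : ℕ) : ℝ) ≤ (n : ℝ) ^ j * (n : ℝ) ^ (k - j) := by
      calc ((n.choose k : ℕ) : ℝ) ≤ ((n ^ k : ℕ) : ℝ) := by exact_mod_cast Nat.choose_le_pow n k
        _ = (n : ℝ) ^ k := by push_cast; rfl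
        _ = (n : ℝ) ^ j * (n : ℝ) ^ (k - j) := by rw [← pow_add]; congr 1; omega
    have c2 : (((2 * b').choose b' : ℕ) : ℝ) ≤ (4 : ℝ) ^ b' := by
      calc (((2 * b').choose b' : ℕ) : ℝ) ≤ ((2 ^ (2 * b') : ℕ) : ℝ) := by
            exact_mod_cast MTTaux.choose_le_two_pow (2 * b') b'
        _ = (4 : ℝ) ^ b' := by push_cast; rw [pow_mul]; norm_num
    have c3 : ((q * n.choose (k - j) : ℕ) : ℝ) ≤ (q : ℝ) * (n : ℝ) ^ (k - j) := by
      push_cast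
      refine mul_le_mul_of_nonneg_left ?_ (by positivity)
      calc ((n.choose (k - j) : ℕ) : ℝ) ≤ ((n ^ (k - j) : ℕ) : ℝ) := by
            exact_mod_cast Nat.choose_le_pow n (k - j)
        _ = (n : ℝ) ^ (k - j) := by push_cast; rfl
    have c4 : (((ℓ * (ℓ * n ^ (k - j - 1))).choose r : ℕ) : ℝ) ≤
        ((ℓ : ℝ) * (n : ℝ) ^ (k - j - 1)) ^ r * (3 * (q : ℝ)) ^ r := by
      have hkey := MTTaux.key_choose_bound (ℓ * (ℓ * n ^ (k - j - 1))) ℓ (n ^ (k - j - 1)) q r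
        (by rw [Nat.mul_assoc]) (hlr.trans_eq (Nat.mul_comm r q))
      calc (((ℓ * (ℓ * n ^ (k - j - 1))).choose r : ℕ) : ℝ)
          ≤ ((ℓ : ℝ) * ((n ^ (k - j - 1) : ℕ) : ℝ)) ^ r * (3 * (q : ℝ)) ^ r := hkey
        _ = ((ℓ : ℝ) * (n : ℝ) ^ (k - j - 1)) ^ r * (3 * (q : ℝ)) ^ r := by push_cast; rfl
    have hb'l : b' ≤ ℓ - 1 := by omega
    have hbl : b' + 1 ≤ ℓ - 1 := by omega
    have hrl : r ≤ ℓ - 1 := by omega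
    calc ((minTravTriples k j V ℓ r (b' + 1)).ncard : ℝ)
        ≤ ((n.choose k : ℕ) : ℝ) * ((((2 * b').choose b' : ℕ) : ℝ) *
            (((q * n.choose (k - j) : ℕ) : ℝ)) ^ b') *
          ((2 : ℝ) ^ (q * (b' + 1)) * (((ℓ * (ℓ * n ^ (k - j - 1))).choose r : ℕ) : ℝ)) := by
          have := htotal
          have hcast : ((minTravTriples k j V ℓ r (b' + 1)).ncard : ℝ) ≤
              ((n.choose k * ((2 * b').choose b' * (q * n.choose (k - j)) ^ b') *
              (2 ^ (q * (b' + 1)) * ((ℓ * (ℓ * n ^ (k - j - 1))).choose r)) : ℕ) : ℝ) := by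
            exact_mod_cast this
          refine hcast.trans (le_of_eq ?_)
          push_cast
          ring
      _ ≤ ((n : ℝ) ^ j * (n : ℝ) ^ (k - j)) * ((4 : ℝ) ^ b' *
            ((q : ℝ) * (n : ℝ) ^ (k - j)) ^ b') *
          ((2 : ℝ) ^ (q * (b' + 1)) *
            (((ℓ : ℝ) * (n : ℝ) ^ (k - j - 1)) ^ r * (3 * (q : ℝ)) ^ r)) := by
          gcongr
          all_goals first
            | exact c1 | exact c2 | exact c3 | exact c4
            | exact Nat.cast_nonneg _ | positivity
      _ = (n : ℝ) ^ j * ((n : ℝ) ^ (k - j)) ^ (b' + 1) *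
            ((ℓ : ℝ) * (n : ℝ) ^ (k - j - 1)) ^ r *
          ((4 : ℝ) ^ b' * (q : ℝ) ^ b' * ((2 : ℝ) ^ q) ^ (b' + 1) * (3 * (q : ℝ)) ^ r) := by
          rw [mul_pow ((q : ℝ)) ((n : ℝ) ^ (k - j)) b', pow_mul]
          ring
      _ ≤ (n : ℝ) ^ j * ((n : ℝ) ^ (k - j)) ^ (b' + 1) *
            ((ℓ : ℝ) * (n : ℝ) ^ (k - j - 1)) ^ r *
          ((4 : ℝ) ^ (ℓ - 1) * (q : ℝ) ^ (ℓ - 1) * ((2 : ℝ) ^ q) ^ (ℓ - 1) *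
            (3 * (q : ℝ)) ^ (ℓ - 1)) := by
          have hbase3q : (1 : ℝ) ≤ 3 * (q : ℝ) := by linarith
          gcongr
          all_goals first
            | exact h2q | exact hq1R | exact hbase3q | norm_num | omega
      _ = (n : ℝ) ^ j * (4 * 2 ^ q * (q : ℝ) * (3 * q)) ^ (ℓ - 1) *
            ((n : ℝ) ^ (k - j)) ^ (b' + 1) *
            ((ℓ : ℝ) * (n : ℝ) ^ (k - j - 1)) ^ r := by
          rw [mul_pow (4 * 2 ^ q * (q : ℝ)) (3 * (q : ℝ)) (ℓ - 1),
            mul_pow (4 * (2 : ℝ) ^ q) ((q : ℝ)) (ℓ - 1),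
            mul_pow (4 : ℝ) ((2 : ℝ) ^ q) (ℓ - 1)]
          ring
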